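/- There exist constants C, C' > 0 such that for all x in (0, 1], (1/x^2) * |2*I_1(x)*K_1(x) + 2*I_2(x)*K_0(x) - 1| ≤ -C * log x + C'. -/

import Mathlib

open Real Set MeasureTheory Filter

lemma half_exp_le_cosh (t : ℝ) : exp t / 2 ≤ Real.cosh t := by
  rw [Real.cosh_eq]
  have := (Real.exp_pos (-t)).le
  linarith

lemma cosh_le_exp_of_nonneg {t : ℝ} (ht : 0 ≤ t) : Real.cosh t ≤ exp t := by
  rw [Real.cosh_eq]
  have h : exp (-t) ≤ exp t := Real.exp_le_exp.2 (by linarith)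
  linarith

lemma sinh_le_exp_of_nonneg (t : ℝ) : Real.sinh t ≤ exp t := by
  rw [Real.sinh_eq]
  have := (Real.exp_pos (-t)).le
  have := (Real.exp_pos t).le
  linarith

-- cube bound: for z ≥ 0, z^3 ≤ 27 * exp z
lemma cube_le_exp {z : ℝ} (hz : 0 ≤ z) : z ^ 3 ≤ 27 * exp z := by
  have h1 : z / 3 ≤ exp (z / 3) := (Real.add_one_le_exp _).trans' (by linarith)
  have h2 : (z / 3) ^ 3 ≤ (exp (z / 3)) ^ 3 := by
    apply pow_le_pow_left₀ (by linarith) h1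
  rw [← Real.exp_nat_mul] at h2
  have h3 : (3:ℕ) * (z / 3) = z := by push_cast; ring
  rw [h3] at h2
  nlinarith [h2]

-- pointwise kernel domination
lemma kernel_bound {x t : ℝ} (hx : 0 < x) (ht : 0 ≤ t) :
    exp (-x * Real.cosh t) * exp (2 * t) ≤ 216 / x ^ 3 * exp (-t) := by
  have h1 : exp (-x * Real.cosh t) ≤ exp (-(x / 2 * exp t)) := by
    apply Real.exp_le_exp.2
    have := half_exp_le_cosh t
    nlinarith
  set z := x / 2 * exp t with hzdef
  have hz : 0 < z := by positivity
  have h2 : z ^ 3 ≤ 27 * exp z := cube_le_exp hz.le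
  -- exp(-z) * exp(3t) ≤ 27 * exp(3t) / z^3 = 27 * 8 / x^3
  have hexpz : exp (-z) = 1 / exp z := by rw [Real.exp_neg]; ring
  have h3 : exp (-z) * exp (2 * t) * exp t ≤ 216 / x ^ 3 := by
    have het : exp (2 * t) * exp t = exp t ^ 3 := by
      rw [← Real.exp_add, ← Real.exp_nat_mul]; norm_num; ring_nf
    have hz3 : z ^ 3 = x ^ 3 / 8 * exp t ^ 3 := by rw [hzdef]; ring
    rw [hexpz, mul_assoc, het]
    rw [div_mul_eq_mul_div, div_le_div_iff₀ (Real.exp_pos z) (by positivity)]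
    calc 1 * exp t ^ 3 * x ^ 3 = 8 * z ^ 3 := by rw [hz3]; ring
      _ ≤ 8 * (27 * exp z) := by linarith
      _ = 216 * exp z := by ring
  calc exp (-x * Real.cosh t) * exp (2 * t)
      ≤ exp (-z) * exp (2 * t) := by
        apply mul_le_mul_of_nonneg_right h1 (Real.exp_pos _).le
    _ = exp (-z) * exp (2 * t) * exp t * exp (-t) := by
        rw [mul_assoc, mul_assoc, ← Real.exp_add, ← Real.exp_add, ← Real.exp_add]
        ring_nf
        rw [Real.exp_add]
    _ ≤ 216 / x ^ 3 * exp (-t) := by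
        apply mul_le_mul_of_nonneg_right h3 (Real.exp_pos _).le

-- integrability by comparison with M * exp(-t)
lemma integrableOn_of_le_exp_neg {f : ℝ → ℝ} (hf : Continuous f) (M : ℝ)
    (hb : ∀ t ∈ Ioi (0:ℝ), |f t| ≤ M * exp (-t)) : IntegrableOn f (Ioi (0:ℝ)) := by
  apply Integrable.mono ((exp_neg_integrableOn_Ioi 0 one_pos).const_mul M)
    hf.aestronglyMeasurable.restrict
  rw [ae_restrict_iff' measurableSet_Ioi]
  filter_upwards with t ht
  have := hb t ht
  simp only [norm_eq_abs, neg_mul, one_mul] at *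
  exact this.trans (le_abs_self _)

lemma exp_kernel_bound {x t : ℝ} (hx : 0 < x) (ht : 0 ≤ t) :
    exp (-(x / 2 * exp t)) * exp (2 * t) ≤ 216 / x ^ 3 * exp (-t) := by
  set z := x / 2 * exp t with hzdef
  have hz : 0 < z := by positivity
  have h2 : z ^ 3 ≤ 27 * exp z := cube_le_exp hz.le
  have hexpz : exp (-z) = 1 / exp z := by rw [Real.exp_neg]; ring
  have het3 : exp t ^ 3 = exp (2 * t) * exp t := by
    rw [← Real.exp_add, ← Real.exp_nat_mul]; norm_num; ring_nf
  have hz3 : z ^ 3 = x ^ 3 / 8 * exp t ^ 3 := by rw [hzdef]; ring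
  have key : exp (-z) * exp (2 * t) * exp t ≤ 216 / x ^ 3 := by
    rw [hexpz, mul_assoc, ← het3]
    rw [div_mul_eq_mul_div, div_le_div_iff₀ (Real.exp_pos z) (by positivity)]
    calc 1 * exp t ^ 3 * x ^ 3 = 8 * z ^ 3 := by rw [hz3]; ring
      _ ≤ 8 * (27 * exp z) := by linarith
      _ = 216 * exp z := by ring
  calc exp (-z) * exp (2 * t)
      = exp (-z) * exp (2 * t) * exp t * exp (-t) := by
        rw [mul_assoc, mul_assoc, ← Real.exp_add t]
        norm_num
    _ ≤ 216 / x ^ 3 * exp (-t) := mul_le_mul_of_nonneg_right key (Real.exp_pos _).le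

lemma integrableOn_kernel_mul {x : ℝ} (hx : 0 < x) {g : ℝ → ℝ} (hg : Continuous g)
    (hgb : ∀ t, 0 ≤ t → |g t| ≤ exp (2 * t)) :
    IntegrableOn (fun t => exp (-x * Real.cosh t) * g t) (Ioi (0:ℝ)) := by
  apply integrableOn_of_le_exp_neg (by continuity) (216 / x ^ 3)
  intro t ht
  have ht0 : (0:ℝ) ≤ t := (le_of_lt ht)
  rw [abs_mul, abs_of_pos (Real.exp_pos _)]
  calc exp (-x * Real.cosh t) * |g t| ≤ exp (-x * Real.cosh t) * exp (2 * t) :=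
        mul_le_mul_of_nonneg_left (hgb t ht0) (Real.exp_pos _).le
    _ ≤ 216 / x ^ 3 * exp (-t) := kernel_bound hx ht0

lemma abs_cosh_le {k : ℕ} (hk : k ≤ 2) {t : ℝ} (ht : 0 ≤ t) :
    |Real.cosh ((k:ℝ) * t)| ≤ exp (2 * t) := by
  rw [abs_of_pos (Real.cosh_pos _)]
  calc Real.cosh ((k:ℝ) * t) ≤ exp ((k:ℝ) * t) := cosh_le_exp_of_nonneg (by positivity)
    _ ≤ exp (2 * t) := by
        apply Real.exp_le_exp.2
        have : (k:ℝ) ≤ 2 := by exact_mod_cast hk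
        nlinarith

lemma integrableOn_K {x : ℝ} (hx : 0 < x) {k : ℕ} (hk : k ≤ 2) :
    IntegrableOn (fun t => exp (-x * Real.cosh t) * Real.cosh ((k:ℝ) * t)) (Ioi (0:ℝ)) :=
  integrableOn_kernel_mul hx (by continuity) (fun t ht => abs_cosh_le hk ht)

/-- Modified Bessel function of the first kind of order `k`. -/
noncomputable def besselI (k : ℕ) (x : ℝ) : ℝ :=
  ∑' n : ℕ, (x / 2) ^ (2 * n + k) / (Nat.factorial n * Nat.factorial (n + k))

/-- Modified Bessel function of the second kind of order `k`,
via the integral representation `K_k(x) = ∫_0^∞ e^{-x cosh t} cosh(k t) dt` (valid for `x > 0`). -/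
noncomputable def besselK (k : ℕ) (x : ℝ) : ℝ :=
  ∫ t in Set.Ioi (0 : ℝ), Real.exp (-x * Real.cosh t) * Real.cosh (k * t)

lemma besselK_nonneg (k : ℕ) (x : ℝ) : 0 ≤ besselK k x := by
  apply setIntegral_nonneg measurableSet_Ioi
  intro t _
  positivity

lemma besselK_zero_eq (x : ℝ) : besselK 0 x = ∫ t in Ioi (0:ℝ), exp (-x * Real.cosh t) := by
  unfold besselK
  norm_num

lemma besselK_one_eq (x : ℝ) :
    besselK 1 x = ∫ t in Ioi (0:ℝ), exp (-x * Real.cosh t) * Real.cosh t := by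
  unfold besselK
  norm_num

-- integral of exp (T - t) over Ioi T equals 1
lemma integral_exp_shift (T : ℝ) : (∫ t in Ioi T, exp (T - t)) = 1 := by
  have : ∀ t : ℝ, exp (T - t) = exp T * exp (-t) := by
    intro t; rw [← Real.exp_add]; ring_nf
  simp_rw [this]
  rw [MeasureTheory.integral_const_mul, integral_exp_neg_Ioi, ← Real.exp_add]
  simp

lemma besselK_zero_le {x : ℝ} (hx : x ∈ Ioc (0:ℝ) 1) :
    besselK 0 x ≤ (Real.log 2 - Real.log x) + 1 := by
  obtain ⟨hx0, hx1⟩ := hx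
  set T := Real.log 2 - Real.log x with hTdef
  have hT0 : 0 < T := by
    have h2 : Real.log x ≤ 0 := Real.log_nonpos hx0.le hx1
    have : (0:ℝ) < Real.log 2 := Real.log_pos (by norm_num)
    linarith
  have hexpT : exp T = 2 / x := by
    rw [hTdef, Real.exp_sub, Real.exp_log (by norm_num), Real.exp_log hx0]
  have hint : IntegrableOn (fun t => exp (-x * Real.cosh t)) (Ioi (0:ℝ)) := by
    have := integrableOn_K hx0 (k := 0) (by norm_num)
    simpa using this
  rw [besselK_zero_eq]
  have hsplit : (∫ t in Ioi (0:ℝ), exp (-x * Real.cosh t))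
      = (∫ t in Ioc (0:ℝ) T, exp (-x * Real.cosh t)) + ∫ t in Ioi T, exp (-x * Real.cosh t) := by
    rw [← setIntegral_union (Set.Ioc_disjoint_Ioi le_rfl) measurableSet_Ioi
      (hint.mono_set Set.Ioc_subset_Ioi_self) (hint.mono_set (Set.Ioi_subset_Ioi hT0.le)),
      Set.Ioc_union_Ioi_eq_Ioi hT0.le]
  rw [hsplit]
  have h1 : (∫ t in Ioc (0:ℝ) T, exp (-x * Real.cosh t)) ≤ T := by
    calc (∫ t in Ioc (0:ℝ) T, exp (-x * Real.cosh t)) ≤ ∫ _t in Ioc (0:ℝ) T, (1:ℝ) := by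
          apply setIntegral_mono_on (hint.mono_set Set.Ioc_subset_Ioi_self)
            (integrableOn_const measure_Ioc_lt_top.ne) measurableSet_Ioc
          intro t _
          rw [Real.exp_le_one_iff]
          have := Real.cosh_pos t
          nlinarith
      _ = T := by
          rw [setIntegral_const, measureReal_def, Real.volume_Ioc, smul_eq_mul, mul_one,
            ENNReal.toReal_ofReal (by linarith)]
          simp
  have h2 : (∫ t in Ioi T, exp (-x * Real.cosh t)) ≤ 1 := by
    have hb : ∀ t ∈ Ioi T, exp (-x * Real.cosh t) ≤ exp (T - t) := by
      intro t ht
      apply Real.exp_le_exp.2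
      -- x cosh t ≥ (x/2) e^t = e^{t - T} ≥ t - T... need -x cosh t ≤ T - t
      have hc : x / 2 * exp t ≤ x * Real.cosh t := by
        have := half_exp_le_cosh t
        nlinarith
      have he : exp (t - T) = x / 2 * exp t := by
        rw [Real.exp_sub, hexpT]
        field_simp
      have : (t - T) ≤ exp (t - T) := (Real.add_one_le_exp _).trans' (by linarith)
      rw [he] at this
      linarith
    calc (∫ t in Ioi T, exp (-x * Real.cosh t)) ≤ ∫ t in Ioi T, exp (T - t) := by
          apply setIntegral_mono_on (hint.mono_set (Set.Ioi_subset_Ioi hT0.le)) ?_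
            measurableSet_Ioi hb
          · have h' : IntegrableOn (fun t => exp T * exp (-t)) (Ioi T) :=
              ((exp_neg_integrableOn_Ioi T one_pos).congr_fun
                (by intro t _; norm_num) measurableSet_Ioi).const_mul (exp T)
            apply h'.congr_fun ?_ measurableSet_Ioi
            intro t _
            show exp T * exp (-t) = exp (T - t)
            rw [← Real.exp_add]
            ring_nf
      _ = 1 := integral_exp_shift T
  linarith

lemma integrableOn_exp_kernel {x : ℝ} (hx : 0 < x) :
    IntegrableOn (fun t => exp (-(x / 2 * exp t)) * exp t) (Ioi (0:ℝ)) := by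
  apply integrableOn_of_le_exp_neg (by continuity) (216 / x ^ 3)
  intro t ht
  have ht0 : (0:ℝ) ≤ t := le_of_lt ht
  have h1 : exp t ≤ exp (2 * t) := Real.exp_le_exp.2 (by linarith)
  rw [abs_of_pos (by positivity)]
  calc exp (-(x / 2 * exp t)) * exp t ≤ exp (-(x / 2 * exp t)) * exp (2 * t) :=
        mul_le_mul_of_nonneg_left h1 (Real.exp_pos _).le
    _ ≤ 216 / x ^ 3 * exp (-t) := exp_kernel_bound hx ht0

lemma integral_exp_kernel {x : ℝ} (hx : 0 < x) :
    (∫ t in Ioi (0:ℝ), exp (-(x / 2 * exp t)) * exp t) = 2 / x * exp (-(x / 2)) := by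
  have hderiv : ∀ t ∈ Ioi (0:ℝ),
      HasDerivAt (fun t => -(2 / x) * exp (-(x / 2 * exp t)))
        (exp (-(x / 2 * exp t)) * exp t) t := by
    intro t _
    have h1 : HasDerivAt (fun t : ℝ => -(x / 2 * exp t)) (-(x / 2 * exp t)) t := by
      exact ((Real.hasDerivAt_exp t).const_mul (x / 2)).neg
    have h2 := (Real.exp_neg (x / 2 * exp t)) ▸ (h1.exp.const_mul (-(2 / x)))
    have h3 : HasDerivAt (fun t => -(2 / x) * exp (-(x / 2 * exp t)))
        (-(2 / x) * (exp (-(x / 2 * exp t)) * -(x / 2 * exp t))) t := h1.exp.const_mul (-(2 / x))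
    convert h3 using 1
    have h4 : 2 / x * (x / 2) = 1 := by
      rw [div_mul_div_comm, mul_comm 2 x, div_self (by positivity)]
    linear_combination (-(exp (-(x / 2 * exp t)) * exp t)) * h4
  have htend : Tendsto (fun t : ℝ => -(2 / x) * exp (-(x / 2 * exp t))) atTop (nhds 0) := by
    have h1 : Tendsto (fun t : ℝ => -(x / 2 * exp t)) atTop atBot := by
      apply Filter.tendsto_neg_atTop_atBot.comp
      exact Real.tendsto_exp_atTop.const_mul_atTop (show (0:ℝ) < x / 2 by positivity)
    have h2 : Tendsto (fun t : ℝ => exp (-(x / 2 * exp t))) atTop (nhds 0) :=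
      Real.tendsto_exp_atBot.comp h1
    simpa using h2.const_mul (-(2 / x))
  have hcw : ContinuousWithinAt (fun t : ℝ => -(2 / x) * exp (-(x / 2 * exp t))) (Ici 0) 0 := by
    apply Continuous.continuousWithinAt
    continuity
  have := integral_Ioi_of_hasDerivAt_of_tendsto hcw hderiv (integrableOn_exp_kernel hx) htend
  rw [this]
  norm_num

lemma besselK_one_le {x : ℝ} (hx : 0 < x) : besselK 1 x ≤ 2 / x := by
  rw [besselK_one_eq]
  have hb : ∀ t ∈ Ioi (0:ℝ), exp (-x * Real.cosh t) * Real.cosh t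
      ≤ exp (-(x / 2 * exp t)) * exp t := by
    intro t ht
    have ht0 : (0:ℝ) ≤ t := le_of_lt ht
    apply mul_le_mul (Real.exp_le_exp.2 ?_) (cosh_le_exp_of_nonneg ht0)
      (Real.cosh_pos t).le (Real.exp_pos _).le
    have := half_exp_le_cosh t
    nlinarith
  calc (∫ t in Ioi (0:ℝ), exp (-x * Real.cosh t) * Real.cosh t)
      ≤ ∫ t in Ioi (0:ℝ), exp (-(x / 2 * exp t)) * exp t := by
        apply setIntegral_mono_on ?_ (integrableOn_exp_kernel hx) measurableSet_Ioi hb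
        simpa using integrableOn_K hx (k := 1) (by norm_num)
    _ = 2 / x * exp (-(x / 2)) := integral_exp_kernel hx
    _ ≤ 2 / x := by
        have h1 : exp (-(x / 2)) ≤ 1 := Real.exp_le_one_iff.2 (by linarith)
        have h2 : (0:ℝ) < 2 / x := by positivity
        nlinarith

lemma integral_x_sinh_kernel {x : ℝ} (hx : 0 < x) (hx1 : x ≤ 1) :
    (∫ t in Ioi (0:ℝ), exp (-x * Real.cosh t) * (x * Real.sinh t)) = exp (-x) := by
  have hint : IntegrableOn (fun t => exp (-x * Real.cosh t) * (x * Real.sinh t)) (Ioi (0:ℝ)) := by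
    apply integrableOn_kernel_mul hx (continuous_const.mul Real.continuous_sinh)
    intro t ht
    show |x * Real.sinh t| ≤ exp (2 * t)
    rw [abs_of_nonneg (by positivity : (0:ℝ) ≤ x * Real.sinh t)]
    calc x * Real.sinh t ≤ 1 * Real.sinh t := by
          have := Real.sinh_nonneg_iff.2 ht
          nlinarith
      _ ≤ exp t := by rw [one_mul]; exact sinh_le_exp_of_nonneg t
      _ ≤ exp (2 * t) := Real.exp_le_exp.2 (by linarith)
  have hderiv : ∀ t ∈ Ioi (0:ℝ),
      HasDerivAt (fun t => -exp (-x * Real.cosh t))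
        (exp (-x * Real.cosh t) * (x * Real.sinh t)) t := by
    intro t _
    have h1 : HasDerivAt (fun t : ℝ => -x * Real.cosh t) (-x * Real.sinh t) t :=
      (Real.hasDerivAt_cosh t).const_mul (-x)
    have h2 : HasDerivAt (fun t => -exp (-x * Real.cosh t))
        (-(exp (-x * Real.cosh t) * (-x * Real.sinh t))) t := h1.exp.neg
    convert h2 using 1
    ring
  have htend : Tendsto (fun t : ℝ => -exp (-x * Real.cosh t)) atTop (nhds 0) := by
    have hcosh : Tendsto Real.cosh atTop atTop :=
      tendsto_atTop_mono (fun t => half_exp_le_cosh t)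
        (Real.tendsto_exp_atTop.atTop_div_const two_pos)
    have h1 : Tendsto (fun t : ℝ => -x * Real.cosh t) atTop atBot := by
      have := Filter.tendsto_neg_atTop_atBot.comp (hcosh.const_mul_atTop hx)
      exact this.congr (fun t => by simp [Function.comp, neg_mul])
    have h2 := Real.tendsto_exp_atBot.comp h1
    simpa using h2.neg
  have hcw : ContinuousWithinAt (fun t : ℝ => -exp (-x * Real.cosh t)) (Ici 0) 0 :=
    Continuous.continuousWithinAt
      ((Real.continuous_exp.comp (continuous_const.mul Real.continuous_cosh)).neg)
  have := integral_Ioi_of_hasDerivAt_of_tendsto hcw hderiv hint htend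
  rw [this]
  simp

lemma integrableOn_kernel_exp_neg {x : ℝ} (hx : 0 < x) :
    IntegrableOn (fun t => exp (-x * Real.cosh t) * exp (-t)) (Ioi (0:ℝ)) := by
  apply integrableOn_kernel_mul hx (by continuity)
  intro t ht
  rw [abs_of_pos (Real.exp_pos _)]
  exact Real.exp_le_exp.2 (by linarith)

lemma xbesselK_one_near {x : ℝ} (hx : x ∈ Ioc (0:ℝ) 1) :
    |x * besselK 1 x - 1| ≤ x ^ 2 * (Real.log 2 - Real.log x) + 3 / 2 * x ^ 2 := by
  obtain ⟨hx0, hx1⟩ := hx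
  set T := Real.log 2 - Real.log x with hTdef
  have hT0 : 0 < T := by
    have h2 : Real.log x ≤ 0 := Real.log_nonpos hx0.le hx1
    have : (0:ℝ) < Real.log 2 := Real.log_pos (by norm_num)
    linarith
  have hexpT : exp T = 2 / x := by
    rw [hTdef, Real.exp_sub, Real.exp_log (by norm_num), Real.exp_log hx0]
  have hexpnegT : exp (-T) = x / 2 := by
    rw [Real.exp_neg, hexpT]
    field_simp
  -- split cosh t = sinh t + exp (-t)
  have hsplitfun : ∀ t : ℝ, exp (-x * Real.cosh t) * Real.cosh t
      = exp (-x * Real.cosh t) * Real.sinh t + exp (-x * Real.cosh t) * exp (-t) := by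
    intro t
    have := Real.cosh_sub_sinh t
    nlinarith [Real.exp_pos (-x * Real.cosh t)]
  have hintsinh : IntegrableOn (fun t => exp (-x * Real.cosh t) * Real.sinh t) (Ioi (0:ℝ)) := by
    apply integrableOn_kernel_mul hx0 (by continuity)
    intro t ht
    rw [abs_of_nonneg (Real.sinh_nonneg_iff.2 ht)]
    exact (sinh_le_exp_of_nonneg t).trans (Real.exp_le_exp.2 (by linarith))
  have hB := integrableOn_kernel_exp_neg hx0
  have hKsplit : besselK 1 x = (∫ t in Ioi (0:ℝ), exp (-x * Real.cosh t) * Real.sinh t)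
      + ∫ t in Ioi (0:ℝ), exp (-x * Real.cosh t) * exp (-t) := by
    rw [besselK_one_eq, ← integral_add hintsinh hB]
    exact setIntegral_congr_fun measurableSet_Ioi (fun t _ => hsplitfun t)
  -- the sinh part: x * ∫ = exp (-x)
  have hA : x * (∫ t in Ioi (0:ℝ), exp (-x * Real.cosh t) * Real.sinh t) = exp (-x) := by
    rw [← integral_x_sinh_kernel hx0 hx1, ← integral_const_mul]
    congr 1
    funext t
    ring
  -- the B part: set B := ∫ exp(-x cosh t) exp (-t)
  set B := ∫ t in Ioi (0:ℝ), exp (-x * Real.cosh t) * exp (-t) with hBdef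
  -- 1 - B = D where D = ∫ (1 - exp(-x cosh t)) exp (-t)
  have hintexp : IntegrableOn (fun t : ℝ => exp (-t)) (Ioi (0:ℝ)) :=
    (exp_neg_integrableOn_Ioi 0 one_pos).congr_fun (by intro t _; norm_num) measurableSet_Ioi
  have hintD : IntegrableOn (fun t => (1 - exp (-x * Real.cosh t)) * exp (-t)) (Ioi (0:ℝ)) := by
    apply IntegrableOn.congr_fun (hintexp.sub hB) ?_ measurableSet_Ioi
    intro t _
    simp only [Pi.sub_apply]
    ring
  have hD : (∫ t in Ioi (0:ℝ), (1 - exp (-x * Real.cosh t)) * exp (-t)) = 1 - B := by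
    have hcong : (∫ t in Ioi (0:ℝ), (1 - exp (-x * Real.cosh t)) * exp (-t))
        = ∫ t in Ioi (0:ℝ), (exp (-t) - exp (-x * Real.cosh t) * exp (-t)) := by
      apply setIntegral_congr_fun measurableSet_Ioi
      intro t _
      ring
    rw [hcong, integral_sub hintexp hB, integral_exp_neg_Ioi_zero, hBdef]
  set D := ∫ t in Ioi (0:ℝ), (1 - exp (-x * Real.cosh t)) * exp (-t) with hDdef
  have hDnonneg : 0 ≤ D := by
    apply setIntegral_nonneg measurableSet_Ioi
    intro t _
    have h1 : exp (-x * Real.cosh t) ≤ 1 := Real.exp_le_one_iff.2 (by nlinarith [Real.cosh_pos t])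
    have := (Real.exp_pos (-t)).le
    nlinarith
  -- bound D ≤ x * T + x / 2
  have hDle : D ≤ x * T + x / 2 := by
    have hsplit : D = (∫ t in Ioc (0:ℝ) T, (1 - exp (-x * Real.cosh t)) * exp (-t))
        + ∫ t in Ioi T, (1 - exp (-x * Real.cosh t)) * exp (-t) := by
      rw [hDdef, ← setIntegral_union (Set.Ioc_disjoint_Ioi le_rfl) measurableSet_Ioi
        (hintD.mono_set Set.Ioc_subset_Ioi_self) (hintD.mono_set (Set.Ioi_subset_Ioi hT0.le)),
        Set.Ioc_union_Ioi_eq_Ioi hT0.le]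
    have h1 : (∫ t in Ioc (0:ℝ) T, (1 - exp (-x * Real.cosh t)) * exp (-t)) ≤ x * T := by
      calc (∫ t in Ioc (0:ℝ) T, (1 - exp (-x * Real.cosh t)) * exp (-t))
          ≤ ∫ _t in Ioc (0:ℝ) T, x := by
            apply setIntegral_mono_on (hintD.mono_set Set.Ioc_subset_Ioi_self)
              (integrableOn_const measure_Ioc_lt_top.ne) measurableSet_Ioc
            intro t ht
            have ht0 : (0:ℝ) < t := ht.1
            -- 1 - exp(-u) ≤ u with u = x cosh t; then * exp(-t) ≤ x cosh t exp (-t) ≤ x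
            have hu : 1 - exp (-(x * Real.cosh t)) ≤ x * Real.cosh t := by
              have := Real.add_one_le_exp (-(x * Real.cosh t))
              linarith
            have hc : Real.cosh t * exp (-t) ≤ 1 := by
              have h3 : Real.cosh t ≤ exp t := cosh_le_exp_of_nonneg ht0.le
              have h4 : exp t * exp (-t) = 1 := by rw [← Real.exp_add]; simp
              nlinarith [Real.exp_pos (-t)]
            have h5 : (1 - exp (-x * Real.cosh t)) * exp (-t)
                ≤ x * Real.cosh t * exp (-t) := by
              rw [neg_mul]
              exact mul_le_mul_of_nonneg_right hu (Real.exp_pos _).le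
            calc (1 - exp (-x * Real.cosh t)) * exp (-t) ≤ x * Real.cosh t * exp (-t) := h5
              _ = x * (Real.cosh t * exp (-t)) := by ring
              _ ≤ x * 1 := by nlinarith
              _ = x := mul_one x
        _ = x * T := by
            rw [setIntegral_const, measureReal_def, Real.volume_Ioc, smul_eq_mul,
              ENNReal.toReal_ofReal (by linarith)]
            ring
    have h2 : (∫ t in Ioi T, (1 - exp (-x * Real.cosh t)) * exp (-t)) ≤ x / 2 := by
      calc (∫ t in Ioi T, (1 - exp (-x * Real.cosh t)) * exp (-t))
          ≤ ∫ t in Ioi T, exp (-t) := by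
            apply setIntegral_mono_on (hintD.mono_set (Set.Ioi_subset_Ioi hT0.le))
              ((exp_neg_integrableOn_Ioi T one_pos).congr_fun
                (by intro t _; norm_num) measurableSet_Ioi) measurableSet_Ioi
            intro t _
            have h1 : exp (-x * Real.cosh t) ≤ 1 :=
              Real.exp_le_one_iff.2 (by nlinarith [Real.cosh_pos t])
            have h0 : 0 ≤ exp (-x * Real.cosh t) := (Real.exp_pos _).le
            nlinarith [Real.exp_pos (-t)]
        _ = x / 2 := by rw [integral_exp_neg_Ioi, hexpnegT]
    rw [hsplit]
    exact add_le_add h1 h2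
  -- combine: x K₁ = exp(-x) + x * B = exp(-x) + x - x * D
  have hxK : x * besselK 1 x = exp (-x) + x - x * D := by
    rw [hKsplit, mul_add, hA]
    have hB1 : B = 1 - D := by rw [hDdef]; linarith [hD]
    rw [hB1]
    ring
  rw [hxK]
  have hexpbound : |exp (-x) - 1 + x| ≤ x ^ 2 := by
    have := Real.abs_exp_sub_one_sub_id_le (x := -x) (by rw [abs_neg, abs_of_pos hx0]; exact hx1)
    rw [neg_sq] at this
    convert this using 2
    ring
  have habs : |exp (-x) + x - x * D - 1| ≤ |exp (-x) - 1 + x| + x * D := by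
    have h1 : 0 ≤ x * D := by positivity
    rw [abs_le]
    constructor <;> cases abs_le.1 (le_refl |exp (-x) - 1 + x|) <;>
      [skip; skip] <;> cases' abs_le.1 (le_refl |exp (-x) - 1 + x|) with hl hr
    · have := neg_abs_le (exp (-x) - 1 + x)
      linarith
    · have := le_abs_self (exp (-x) - 1 + x)
      linarith
  calc |exp (-x) + x - x * D - 1| ≤ |exp (-x) - 1 + x| + x * D := habs
    _ ≤ x ^ 2 + x * (x * T + x / 2) := by
        have h1 : x * D ≤ x * (x * T + x / 2) := by nlinarith
        linarith
    _ = x ^ 2 * T + 3 / 2 * x ^ 2 := by ring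

lemma besselI_term_le {x : ℝ} (hx0 : 0 < x) (hx1 : x ≤ 1) (k : ℕ) (n : ℕ) :
    (x / 2) ^ (2 * n + k) / (Nat.factorial n * Nat.factorial (n + k))
      ≤ (x / 2) ^ k * (1 / 4 : ℝ) ^ n := by
  have hden : (1:ℝ) ≤ (Nat.factorial n : ℝ) * (Nat.factorial (n + k) : ℝ) := by
    have : 1 ≤ Nat.factorial n * Nat.factorial (n + k) := Nat.one_le_iff_ne_zero.2
      (Nat.mul_ne_zero (Nat.factorial_ne_zero n) (Nat.factorial_ne_zero (n + k)))
    exact_mod_cast this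
  have hnum : (x / 2) ^ (2 * n + k) ≤ (x / 2) ^ k * (1 / 4 : ℝ) ^ n := by
    have h1 : (x / 2) ^ (2 * n + k) = ((x / 2) ^ 2) ^ n * (x / 2) ^ k := by
      rw [← pow_mul, ← pow_add]
    have h2 : ((x / 2) ^ 2 : ℝ) ≤ 1 / 4 := by nlinarith
    have h3 : (((x / 2) ^ 2) ^ n : ℝ) ≤ (1 / 4) ^ n :=
      pow_le_pow_left₀ (by positivity) h2 n
    rw [h1]
    calc ((x / 2) ^ 2) ^ n * (x / 2) ^ k ≤ (1 / 4) ^ n * (x / 2) ^ k :=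
          mul_le_mul_of_nonneg_right h3 (by positivity)
      _ = (x / 2) ^ k * (1 / 4) ^ n := by ring
  calc (x / 2) ^ (2 * n + k) / (Nat.factorial n * Nat.factorial (n + k))
      ≤ (x / 2) ^ (2 * n + k) / 1 := by
        apply div_le_div_of_nonneg_left (by positivity) one_pos hden
    _ = (x / 2) ^ (2 * n + k) := div_one _
    _ ≤ (x / 2) ^ k * (1 / 4 : ℝ) ^ n := hnum

-- the summable majorant
lemma majorant_summable (c : ℝ) : Summable (fun n : ℕ => c * (1 / 4 : ℝ) ^ n) :=
  (summable_geometric_of_lt_one (by norm_num) (by norm_num)).mul_left c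

lemma majorant_tsum (c : ℝ) : ∑' n : ℕ, c * (1 / 4 : ℝ) ^ n = c * (4 / 3) := by
  rw [tsum_mul_left, tsum_geometric_of_lt_one (by norm_num) (by norm_num)]
  norm_num

lemma besselI_summable {x : ℝ} (hx0 : 0 < x) (hx1 : x ≤ 1) (k : ℕ) :
    Summable (fun n : ℕ =>
      (x / 2) ^ (2 * n + k) / (Nat.factorial n * Nat.factorial (n + k)) : ℕ → ℝ) := by
  apply Summable.of_nonneg_of_le (fun n => by positivity)
    (besselI_term_le hx0 hx1 k) (majorant_summable _)

lemma besselI_two_bounds {x : ℝ} (hx0 : 0 < x) (hx1 : x ≤ 1) :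
    0 ≤ besselI 2 x ∧ besselI 2 x ≤ x ^ 2 / 2 := by
  constructor
  · exact tsum_nonneg (fun n => by positivity)
  · unfold besselI
    calc (∑' n : ℕ, (x / 2) ^ (2 * n + 2) / (Nat.factorial n * Nat.factorial (n + 2)))
        ≤ ∑' n : ℕ, (x / 2) ^ 2 * (1 / 4 : ℝ) ^ n :=
          Summable.tsum_le_tsum (besselI_term_le hx0 hx1 2) (besselI_summable hx0 hx1 2)
            (majorant_summable _)
      _ = (x / 2) ^ 2 * (4 / 3) := majorant_tsum _
      _ ≤ x ^ 2 / 2 := by nlinarith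

lemma besselI_one_bounds {x : ℝ} (hx0 : 0 < x) (hx1 : x ≤ 1) :
    0 ≤ 2 * besselI 1 x - x ∧ 2 * besselI 1 x - x ≤ x ^ 3 := by
  have hsum := besselI_summable hx0 hx1 1
  have hzero : besselI 1 x = x / 2 + ∑' n : ℕ,
      (x / 2) ^ (2 * (n + 1) + 1) / (Nat.factorial (n + 1) * Nat.factorial (n + 1 + 1)) := by
    unfold besselI
    rw [Summable.tsum_eq_zero_add hsum]
    norm_num
  set R := ∑' n : ℕ,
    (x / 2) ^ (2 * (n + 1) + 1) / (Nat.factorial (n + 1) * Nat.factorial (n + 1 + 1)) with hR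
  have hRnonneg : 0 ≤ R := tsum_nonneg (fun n => by positivity)
  have hRle : R ≤ x ^ 3 / 2 := by
    have hterm : ∀ n : ℕ,
        (x / 2) ^ (2 * (n + 1) + 1) / (Nat.factorial (n + 1) * Nat.factorial (n + 1 + 1))
          ≤ (x / 2) ^ 3 * (1 / 4 : ℝ) ^ n := by
      intro n
      have hden : (1:ℝ) ≤ (Nat.factorial (n+1) : ℝ) * (Nat.factorial (n + 2) : ℝ) := by
        have : 1 ≤ Nat.factorial (n+1) * Nat.factorial (n + 2) := Nat.one_le_iff_ne_zero.2
          (Nat.mul_ne_zero (Nat.factorial_ne_zero _) (Nat.factorial_ne_zero _))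
        exact_mod_cast this
      have hnum : (x / 2) ^ (2 * (n + 1) + 1) ≤ (x / 2) ^ 3 * (1 / 4 : ℝ) ^ n := by
        have h1 : (x / 2) ^ (2 * (n + 1) + 1) = ((x / 2) ^ 2) ^ n * (x / 2) ^ 3 := by
          rw [← pow_mul, ← pow_add]
          ring_nf
        have h2 : ((x / 2) ^ 2 : ℝ) ≤ 1 / 4 := by nlinarith
        have h3 : (((x / 2) ^ 2) ^ n : ℝ) ≤ (1 / 4) ^ n :=
          pow_le_pow_left₀ (by positivity) h2 n
        rw [h1]
        calc ((x / 2) ^ 2) ^ n * (x / 2) ^ 3 ≤ (1 / 4) ^ n * (x / 2) ^ 3 :=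
              mul_le_mul_of_nonneg_right h3 (by positivity)
          _ = (x / 2) ^ 3 * (1 / 4) ^ n := by ring
      calc (x / 2) ^ (2 * (n + 1) + 1) / (Nat.factorial (n+1) * Nat.factorial (n + 1 + 1))
          ≤ (x / 2) ^ (2 * (n + 1) + 1) / 1 := by
            apply div_le_div_of_nonneg_left (by positivity) one_pos
            exact_mod_cast hden
        _ = (x / 2) ^ (2 * (n + 1) + 1) := div_one _
        _ ≤ (x / 2) ^ 3 * (1 / 4 : ℝ) ^ n := hnum
    have hsum' : Summable (fun n : ℕ =>
        (x / 2) ^ (2 * (n + 1) + 1) / (Nat.factorial (n+1) * Nat.factorial (n + 1 + 1)) : ℕ → ℝ) :=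
      Summable.of_nonneg_of_le (fun n => by positivity) hterm (majorant_summable _)
    calc R ≤ ∑' n : ℕ, (x / 2) ^ 3 * (1 / 4 : ℝ) ^ n :=
          Summable.tsum_le_tsum hterm hsum' (majorant_summable _)
      _ = (x / 2) ^ 3 * (4 / 3) := majorant_tsum _
      _ ≤ x ^ 3 / 2 := by ring_nf; nlinarith [pow_pos hx0 3]
  constructor
  · rw [hzero]; linarith
  · rw [hzero]; linarith

theorem green_fn_log_bound :
    ∃ C : ℝ, 0 < C ∧ ∃ C' : ℝ, 0 < C' ∧ ∀ x ∈ Set.Ioc (0 : ℝ) 1,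
      (1 / x ^ 2) * |2 * besselI 1 x * besselK 1 x + 2 * besselI 2 x * besselK 0 x - 1|
        ≤ -C * Real.log x + C' := by
  refine ⟨2, by norm_num, 6, by norm_num, ?_⟩
  rintro x ⟨hx0, hx1⟩
  obtain ⟨T, hTdef⟩ : ∃ T : ℝ, T = Real.log 2 - Real.log x := ⟨_, rfl⟩
  have hT0 : 0 ≤ T := by
    have h2 : Real.log x ≤ 0 := Real.log_nonpos hx0.le hx1
    have : (0:ℝ) < Real.log 2 := Real.log_pos (by norm_num)
    rw [hTdef]
    linarith
  have hK1 := besselK_one_le hx0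
  have hK1n := besselK_nonneg 1 x
  have hK0 := besselK_zero_le ⟨hx0, hx1⟩
  have hK0n := besselK_nonneg 0 x
  obtain ⟨hI2n, hI2⟩ := besselI_two_bounds hx0 hx1
  obtain ⟨hI1n, hI1⟩ := besselI_one_bounds hx0 hx1
  have hxK := xbesselK_one_near ⟨hx0, hx1⟩
  rw [← hTdef] at hK0 hxK
  have key : |2 * besselI 1 x * besselK 1 x + 2 * besselI 2 x * besselK 0 x - 1|
      ≤ x ^ 2 * (2 * T + 9 / 2) := by
    have hsplit : 2 * besselI 1 x * besselK 1 x + 2 * besselI 2 x * besselK 0 x - 1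
        = (2 * besselI 1 x - x) * besselK 1 x + (x * besselK 1 x - 1)
          + 2 * besselI 2 x * besselK 0 x := by ring
    rw [hsplit]
    have h1 : |(2 * besselI 1 x - x) * besselK 1 x| ≤ 2 * x ^ 2 := by
      rw [abs_of_nonneg (mul_nonneg hI1n hK1n)]
      calc (2 * besselI 1 x - x) * besselK 1 x ≤ x ^ 3 * (2 / x) :=
            mul_le_mul hI1 hK1 hK1n (by positivity)
        _ = 2 * x ^ 2 := by field_simp
    have h2 : |x * besselK 1 x - 1| ≤ x ^ 2 * T + 3 / 2 * x ^ 2 := hxK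
    have h3 : |2 * besselI 2 x * besselK 0 x| ≤ x ^ 2 * (T + 1) := by
      rw [abs_of_nonneg (by positivity)]
      calc 2 * besselI 2 x * besselK 0 x ≤ 2 * (x ^ 2 / 2) * (T + 1) := by
            apply mul_le_mul (by linarith) hK0 hK0n (by positivity)
        _ = x ^ 2 * (T + 1) := by ring
    calc |(2 * besselI 1 x - x) * besselK 1 x + (x * besselK 1 x - 1)
          + 2 * besselI 2 x * besselK 0 x|
        ≤ |(2 * besselI 1 x - x) * besselK 1 x + (x * besselK 1 x - 1)|
          + |2 * besselI 2 x * besselK 0 x| := abs_add_le _ _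
      _ ≤ |(2 * besselI 1 x - x) * besselK 1 x| + |x * besselK 1 x - 1|
          + |2 * besselI 2 x * besselK 0 x| := by
            have := abs_add_le ((2 * besselI 1 x - x) * besselK 1 x) (x * besselK 1 x - 1)
            linarith
      _ ≤ 2 * x ^ 2 + (x ^ 2 * T + 3 / 2 * x ^ 2) + x ^ 2 * (T + 1) := by linarith
      _ = x ^ 2 * (2 * T + 9 / 2) := by ring
  have hx2 : (0:ℝ) < x ^ 2 := by positivity
  calc (1 / x ^ 2) * |2 * besselI 1 x * besselK 1 x + 2 * besselI 2 x * besselK 0 x - 1|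
      ≤ (1 / x ^ 2) * (x ^ 2 * (2 * T + 9 / 2)) := by
        apply mul_le_mul_of_nonneg_left key (by positivity)
    _ = 2 * T + 9 / 2 := by field_simp
    _ ≤ -2 * Real.log x + 6 := by
        have hlog2 : Real.log 2 < 0.6931471808 := Real.log_two_lt_d9
        rw [hTdef]
        linarith
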